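/- For r₁ > r₂ and r₃ > 0, the tube T(0,r) := □_r × P_{r₁², max(r₂²,r₃²)} satisfies T(0, r/2) ⊆ π(B̃(0,r)) ⊆ T(0, 2r), where B̃(0,r) = B₁(0,r₁)×B₂(0,r₂)×B₃(0,r₃) is the product of Heisenberg gauge balls B_μ(0,r_μ) = (−r_μ,r_μ)^{2n_μ} × (−r_μ², r_μ²) and π(z,u₁,u₂,u₃) = (z, u₁+u₃, u₂+u₃). -/

import Mathlib

noncomputable section

open Complex MeasureTheory

abbrev Heis (n : ℕ) := (Fin n → ℂ) × ℝ

def Phi {n : ℕ} (z w : Fin n → ℂ) : ℝ :=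
  2 * (∑ j, (starRingEnd ℂ) (z j) * w j).im

def Hmul {n : ℕ} (g h : Heis n) : Heis n :=
  (g.1 + h.1, g.2 + h.2 + Phi g.1 h.1)

def Hinv {n : ℕ} (g : Heis n) : Heis n := (-g.1, -g.2)

abbrev Ntilde (n₁ n₂ n₃ : ℕ) := Heis n₁ × Heis n₂ × Heis n₃

def NtildeMul {n₁ n₂ n₃ : ℕ} (g h : Ntilde n₁ n₂ n₃) : Ntilde n₁ n₂ n₃ :=
  (Hmul g.1 h.1, Hmul g.2.1 h.2.1, Hmul g.2.2 h.2.2)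

def NtildeInv {n₁ n₂ n₃ : ℕ} (g : Ntilde n₁ n₂ n₃) : Ntilde n₁ n₂ n₃ :=
  (Hinv g.1, Hinv g.2.1, Hinv g.2.2)

abbrev NGrp (n₁ n₂ n₃ : ℕ) := (Fin n₁ → ℂ) × (Fin n₂ → ℂ) × (Fin n₃ → ℂ) × ℝ × ℝ

def NMul {n₁ n₂ n₃ : ℕ} (g h : NGrp n₁ n₂ n₃) : NGrp n₁ n₂ n₃ :=
  (g.1 + h.1, g.2.1 + h.2.1, g.2.2.1 + h.2.2.1,
    g.2.2.2.1 + h.2.2.2.1 + Phi g.1 h.1 + Phi g.2.2.1 h.2.2.1,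
    g.2.2.2.2 + h.2.2.2.2 + Phi g.2.1 h.2.1 + Phi g.2.2.1 h.2.2.1)

def NInv {n₁ n₂ n₃ : ℕ} (g : NGrp n₁ n₂ n₃) : NGrp n₁ n₂ n₃ :=
  (-g.1, -g.2.1, -g.2.2.1, -g.2.2.2.1, -g.2.2.2.2)

def projPi {n₁ n₂ n₃ : ℕ} (g : Ntilde n₁ n₂ n₃) : NGrp n₁ n₂ n₃ :=
  (g.1.1, g.2.1.1, g.2.2.1, g.1.2 + g.2.2.2, g.2.1.2 + g.2.2.2)

/-- The cube □_r = (−r,r)^{2n} in ℂ^n ≅ ℝ^{2n}. -/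
def Box (n : ℕ) (r : ℝ) : Set (Fin n → ℂ) :=
  {z | ∀ j, |(z j).re| < r ∧ |(z j).im| < r}

/-- The Heisenberg gauge ball B_μ(0,r) = □_r × (−r², r²). -/
def HBall (n : ℕ) (r : ℝ) : Set (Heis n) :=
  {g | g.1 ∈ Box n r ∧ |g.2| < r ^ 2}

/-- The parallelogram P_{a,b} = {(t₁,t₂) : |t₁−t₂| < a, |t₂| < b}. -/
def Pset (a b : ℝ) : Set (ℝ × ℝ) := {t | |t.1 - t.2| < a ∧ |t.2| < b}

/-- The tube T(0,r) = □_r × P_{r₁², max(r₂²,r₃²)} (case r₁ > r₂). -/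
def Tube (n₁ n₂ n₃ : ℕ) (r₁ r₂ r₃ : ℝ) : Set (NGrp n₁ n₂ n₃) :=
  {g | g.1 ∈ Box n₁ r₁ ∧ g.2.1 ∈ Box n₂ r₂ ∧ g.2.2.1 ∈ Box n₃ r₃ ∧
    (g.2.2.2.1, g.2.2.2.2) ∈ Pset (r₁ ^ 2) (max (r₂ ^ 2) (r₃ ^ 2))}

/-- The product ball B̃(0,r) = B₁(0,r₁) × B₂(0,r₂) × B₃(0,r₃) in Ñ. -/
def ProdBall (n₁ n₂ n₃ : ℕ) (r₁ r₂ r₃ : ℝ) : Set (Ntilde n₁ n₂ n₃) :=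
  {g | g.1 ∈ HBall n₁ r₁ ∧ g.2.1 ∈ HBall n₂ r₂ ∧ g.2.2 ∈ HBall n₃ r₃}


theorem box_mono {n : ℕ} {r r' : ℝ} (h : r ≤ r') : Box n r ⊆ Box n r' :=
  fun _ hz j => ⟨(hz j).1.trans_le h, (hz j).2.trans_le h⟩

/-- T(0,r/2) ⊆ π(B̃(0,r)) ⊆ T(0,2r) for r₁ > r₂ > 0, r₃ > 0. -/
theorem tube_ball_tube (n₁ n₂ n₃ : ℕ) (r₁ r₂ r₃ : ℝ)
    (h₂₁ : r₂ < r₁) (h₂ : 0 < r₂) (h₃ : 0 < r₃) :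
    Tube n₁ n₂ n₃ (r₁ / 2) (r₂ / 2) (r₃ / 2) ⊆ projPi '' ProdBall n₁ n₂ n₃ r₁ r₂ r₃ ∧
    projPi '' ProdBall n₁ n₂ n₃ r₁ r₂ r₃ ⊆ Tube n₁ n₂ n₃ (2 * r₁) (2 * r₂) (2 * r₃) := by
  have h₁ : 0 < r₁ := h₂.trans h₂₁
  have hs : 0 < r₂ ^ 2 + r₃ ^ 2 := by positivity
  constructor
  · rintro ⟨z₁, z₂, z₃, t₁, t₂⟩ ⟨hz₁, hz₂, hz₃, hP⟩
    obtain ⟨hd, hb⟩ := hP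
    simp only at hd hb
    have hb' : |t₂| < (r₂ ^ 2 + r₃ ^ 2) / 4 :=
      hb.trans_le (max_le (by nlinarith [sq_nonneg r₃]) (by nlinarith [sq_nonneg r₂]))
    set s := r₂ ^ 2 + r₃ ^ 2 with hsdef
    have hu₂ : |t₂ * r₂ ^ 2 / s| < r₂ ^ 2 / 4 := by
      rw [abs_div, abs_mul, abs_of_pos hs, _root_.abs_of_nonneg (sq_nonneg r₂)]
      calc |t₂| * r₂ ^ 2 / s < (s / 4) * r₂ ^ 2 / s := by gcongr
        _ = r₂ ^ 2 / 4 := by field_simp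
    have hu₃ : |t₂ * r₃ ^ 2 / s| < r₃ ^ 2 / 4 := by
      rw [abs_div, abs_mul, abs_of_pos hs, _root_.abs_of_nonneg (sq_nonneg r₃)]
      calc |t₂| * r₃ ^ 2 / s < (s / 4) * r₃ ^ 2 / s := by gcongr
        _ = r₃ ^ 2 / 4 := by field_simp
    have hsum : t₂ * r₂ ^ 2 / s + t₂ * r₃ ^ 2 / s = t₂ := by
      field_simp
      ring
    refine ⟨((z₁, t₁ - t₂ * r₃ ^ 2 / s), (z₂, t₂ * r₂ ^ 2 / s), (z₃, t₂ * r₃ ^ 2 / s)),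
      ⟨⟨box_mono (by linarith) hz₁, ?_⟩, ⟨box_mono (by linarith) hz₂, ?_⟩,
        ⟨box_mono (by linarith) hz₃, ?_⟩⟩, ?_⟩
    · show |t₁ - t₂ * r₃ ^ 2 / s| < r₁ ^ 2
      have key : t₁ - t₂ * r₃ ^ 2 / s = (t₁ - t₂) + t₂ * r₂ ^ 2 / s := by linarith
      rw [key]
      calc |(t₁ - t₂) + t₂ * r₂ ^ 2 / s| ≤ |t₁ - t₂| + |t₂ * r₂ ^ 2 / s| := abs_add_le _ _
        _ < r₁ ^ 2 := by nlinarith [abs_nonneg (t₁ - t₂)]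
    · show |t₂ * r₂ ^ 2 / s| < r₂ ^ 2
      linarith [pow_pos h₂ 2]
    · show |t₂ * r₃ ^ 2 / s| < r₃ ^ 2
      linarith [pow_pos h₃ 2]
    · have e1 : t₁ - t₂ * r₃ ^ 2 / s + t₂ * r₃ ^ 2 / s = t₁ := by ring
      simp [projPi, e1, hsum]
  · rintro _ ⟨⟨⟨z₁, u₁⟩, ⟨z₂, u₂⟩, ⟨z₃, u₃⟩⟩, ⟨⟨hz₁, hu₁⟩, ⟨hz₂, hu₂⟩, ⟨hz₃, hu₃⟩⟩, rfl⟩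
    refine ⟨box_mono (by linarith) hz₁, box_mono (by linarith) hz₂,
      box_mono (by linarith) hz₃, ?_, ?_⟩
    · simp only [projPi]
      have : u₁ + u₃ - (u₂ + u₃) = u₁ - u₂ := by ring
      rw [this]
      calc |u₁ - u₂| ≤ |u₁| + |u₂| := abs_sub _ _
        _ < (2 * r₁) ^ 2 := by nlinarith [abs_nonneg u₁, abs_nonneg u₂]
    · simp only [projPi]
      have h1 : |u₂ + u₃| ≤ |u₂| + |u₃| := abs_add_le _ _
      rcases le_total r₂ r₃ with h | h
      · exact lt_of_le_of_lt h1 (lt_of_lt_of_le (by nlinarith)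
          (le_max_right ((2 * r₂) ^ 2) ((2 * r₃) ^ 2)))
      · exact lt_of_le_of_lt h1 (lt_of_lt_of_le (by nlinarith)
          (le_max_left ((2 * r₂) ^ 2) ((2 * r₃) ^ 2)))
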